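/- For every n ∈ ℕ, every 1 ≤ k ≤ n, every strictly increasing j = (j₁,…,j_k) ∈ [k:n] and every I ∈ IS(n): φ^n_k(I, j) = φ^∞_k(n⁻¹I, n⁻¹j), where n⁻¹j := ((2j₁−1)/(2n), …, (2j_k−1)/(2n)). -/

import Mathlib

open TopologicalSpace Filter Set MeasureTheory ProbabilityTheory
open scoped ENNReal symmDiff

noncomputable section

/-- The triangle `▲ = {(x,y) ∈ ℝ² : 0 ≤ x ≤ y ≤ 1}`. -/
def Tri : Set (ℝ × ℝ) := {p | 0 ≤ p.1 ∧ p.1 ≤ p.2 ∧ p.2 ≤ 1}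

/-- The diagonal `Δ = {(x,x) : x ∈ [0,1]}`. -/
def Diag : Set (ℝ × ℝ) := {p | ∃ x : ℝ, 0 ≤ x ∧ x ≤ 1 ∧ p = (x, x)}

/-- Membership in `IS(∞)`: compact subsets of the triangle containing the diagonal. -/
def MemISinf (K : Set (ℝ × ℝ)) : Prop := IsCompact K ∧ K ⊆ Tri ∧ Diag ⊆ K

/-- `IsIS n I`: `I` is an interval system on `[n] = {1,…,n}`: it contains `∅` and all
singletons `{j}`, `j ∈ [n]`, and every nonempty element is an interval `[a,b] ⊆ [n]`. -/
def IsIS (n : ℕ) (I : Set (Finset ℕ)) : Prop :=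
  (∅ : Finset ℕ) ∈ I ∧ (∀ j : ℕ, 1 ≤ j → j ≤ n → ({j} : Finset ℕ) ∈ I) ∧
    ∀ e ∈ I, e ≠ (∅ : Finset ℕ) → ∃ a b : ℕ, 1 ≤ a ∧ a ≤ b ∧ b ≤ n ∧ e = Finset.Icc a b

/-- Extension of a vector `(u₁,…,u_k)` by the conventions `u₀ := -1`, `u_{k+1} := 2`. -/
def uext (k : ℕ) (u : ℕ → ℝ) : ℕ → ℝ := fun i => if i = 0 then -1 else if i ≤ k then u i else 2

/-- The sampling map `φ^∞_k`: it contains `∅`, all singletons, and exactly those intervals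
`[a,b]`, `1 ≤ a < b ≤ k`, for which `K ∩ (u_{a-1},u_a) × (u_b,u_{b+1}) ≠ ∅`. -/
def phiInf (k : ℕ) (K : Set (ℝ × ℝ)) (u : ℕ → ℝ) : Set (Finset ℕ) :=
  {e | e = (∅ : Finset ℕ)} ∪ {e | ∃ j : ℕ, 1 ≤ j ∧ j ≤ k ∧ e = {j}} ∪
    {e | ∃ a b : ℕ, 1 ≤ a ∧ a < b ∧ b ≤ k ∧ e = Finset.Icc a b ∧
      ∃ p ∈ K, uext k u (a - 1) < p.1 ∧ p.1 < uext k u a ∧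
        uext k u b < p.2 ∧ p.2 < uext k u (b + 1)}

/-- Extension of `(j₁,…,j_k) ∈ [k:n]` by the conventions `j₀ := -n`, `j_{k+1} := 2n`. -/
def jext (n k : ℕ) (j : ℕ → ℕ) : ℕ → ℤ :=
  fun i => if i = 0 then -(n : ℤ) else if i ≤ k then (j i : ℤ) else 2 * n

/-- The finite sampling map `φ^n_k`: `[a,b] ∈ φ^n_k(I,j)` iff some `[A,B] ∈ I` satisfies
`j_{a-1} < A ≤ j_a ≤ j_b ≤ B < j_{b+1}`; together with `∅`. -/
def phiFin (n k : ℕ) (I : Set (Finset ℕ)) (j : ℕ → ℕ) : Set (Finset ℕ) :=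
  {e | e = (∅ : Finset ℕ)} ∪
    {e | ∃ a b : ℕ, 1 ≤ a ∧ a ≤ b ∧ b ≤ k ∧ e = Finset.Icc a b ∧
      ∃ A B : ℕ, A ≤ B ∧ Finset.Icc A B ∈ I ∧
        jext n k j (a - 1) < (A : ℤ) ∧ (A : ℤ) ≤ jext n k j a ∧
        jext n k j a ≤ jext n k j b ∧ jext n k j b ≤ (B : ℤ) ∧ (B : ℤ) < jext n k j (b + 1)}

/-- Removing the element `k` from the interval `[a,b]`: it becomes `[a-1,b-1]` if `k < a`,
`[a,b-1]` if `a ≤ k ≤ b`, and stays `[a,b]` if `b < k`. -/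
def eraseElem (k a b : ℕ) : Finset ℕ :=
  if b < k then Finset.Icc a b else if k < a then Finset.Icc (a - 1) (b - 1) else Finset.Icc a (b - 1)

/-- The one-step erasing map `φ^{n+1}_n(⬝, k)`, removing `k` from every interval. -/
def phiStep (I : Set (Finset ℕ)) (k : ℕ) : Set (Finset ℕ) :=
  {e | e = (∅ : Finset ℕ)} ∪
    {e | ∃ a b : ℕ, a ≤ b ∧ Finset.Icc a b ∈ I ∧ e = eraseElem k a b}

/-- The scaled interval system `n⁻¹I = {((a-1)/n, b/n) : ∅ ≠ [a,b] ∈ I} ∪ Δ ⊆ ▲`. -/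
def scaleIS (n : ℕ) (I : Set (Finset ℕ)) : Set (ℝ × ℝ) :=
  {p | ∃ a b : ℕ, 1 ≤ a ∧ a ≤ b ∧ Finset.Icc a b ∈ I ∧
        p = (((a : ℝ) - 1) / n, (b : ℝ) / n)} ∪ Diag

/-- `orderStat k u i` : the `i`-th smallest among `u 1, …, u k`  (for `1 ≤ i ≤ k`). -/
def orderStat (k : ℕ) (u : ℕ → ℝ) (i : ℕ) : ℝ :=
  (Multiset.sort (Multiset.map u (Finset.Icc 1 k).val) (· ≤ ·)).getD (i - 1) 0

/-- The ℓ¹-distance `d((x₁,y₁),(x₂,y₂)) = |x₁-x₂| + |y₁-y₂|` on `ℝ²`. -/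
def dist1 (p q : ℝ × ℝ) : ℝ := |p.1 - q.1| + |p.2 - q.2|

/-- The Hausdorff distance associated with the ℓ¹-distance on `ℝ²`. -/
def hd1 (K L : Set (ℝ × ℝ)) : ℝ :=
  max (sSup ((fun p => sInf (dist1 p '' L)) '' K))
      (sSup ((fun p => sInf (dist1 p '' K)) '' L))

/-- `enumOf s r` : the `r`-th smallest element of the finite set `s` (`1`-based). -/
def enumOf (s : Finset ℕ) (r : ℕ) : ℕ := (s.sort (· ≤ ·)).getD (r - 1) 0

lemma dkey {n : ℕ} (hn : 0 < n) (x y : ℝ) : x / n < y / (2 * n) ↔ 2 * x < y := by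
  have hn' : (0:ℝ) < n := by exact_mod_cast hn
  rw [div_lt_div_iff₀ hn' (by linarith), show x * (2 * n) = (2 * x) * n by ring]
  exact mul_lt_mul_iff_left₀ hn'

lemma dkey' {n : ℕ} (hn : 0 < n) (x y : ℝ) : x / (2 * n) < y / n ↔ x < 2 * y := by
  have hn' : (0:ℝ) < n := by exact_mod_cast hn
  rw [div_lt_div_iff₀ (by linarith) hn', show y * (2 * n) = (2 * y) * n by ring]
  exact mul_lt_mul_iff_left₀ hn'

lemma L1 {n A m : ℕ} (hn : 0 < n) :
    ((A:ℝ) - 1) / n < (2 * (m:ℝ) - 1) / (2 * n) ↔ A ≤ m := by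
  rw [dkey hn]
  constructor
  · intro h
    have h2 : (2 * A : ℕ) < 2 * m + 1 := by
      exact_mod_cast show ((2 * A : ℕ) : ℝ) < ((2 * m + 1 : ℕ) : ℝ) by push_cast; linarith
    omega
  · intro h
    have h' : (A:ℝ) ≤ m := by exact_mod_cast h
    linarith

lemma L2 {n A m : ℕ} (hn : 0 < n) :
    (2 * (m:ℝ) - 1) / (2 * n) < ((A:ℝ) - 1) / n ↔ m < A := by
  rw [dkey' hn]
  constructor
  · intro h
    have h2 : (2 * m : ℕ) < 2 * A := by
      exact_mod_cast show ((2 * m : ℕ) : ℝ) < ((2 * A : ℕ) : ℝ) by push_cast; linarith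
    omega
  · intro h
    have h' : (m:ℝ) + 1 ≤ A := by exact_mod_cast h
    linarith

lemma L3 {n B m : ℕ} (hn : 0 < n) :
    (2 * (m:ℝ) - 1) / (2 * n) < (B:ℝ) / n ↔ m ≤ B := by
  rw [dkey' hn]
  constructor
  · intro h
    have h2 : (2 * m : ℕ) < 2 * B + 1 := by
      exact_mod_cast show ((2 * m : ℕ) : ℝ) < ((2 * B + 1 : ℕ) : ℝ) by push_cast; linarith
    omega
  · intro h
    have h' : (m:ℝ) ≤ B := by exact_mod_cast h
    linarith

lemma L4 {n B m : ℕ} (hn : 0 < n) :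
    (B:ℝ) / n < (2 * (m:ℝ) - 1) / (2 * n) ↔ B < m := by
  rw [dkey hn]
  constructor
  · intro h
    have h2 : (2 * B : ℕ) < 2 * m := by
      exact_mod_cast show ((2 * B : ℕ) : ℝ) < ((2 * m : ℕ) : ℝ) by push_cast; linarith
    omega
  · intro h
    have h' : (B:ℝ) + 1 ≤ m := by exact_mod_cast h
    linarith

lemma uext_zero (k : ℕ) (u : ℕ → ℝ) : uext k u 0 = -1 := by simp [uext]

lemma uext_of (k : ℕ) (u : ℕ → ℝ) {i : ℕ} (h1 : 1 ≤ i) (h2 : i ≤ k) :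
    uext k u i = u i := by
  unfold uext; rw [if_neg (by omega), if_pos h2]

lemma uext_top (k : ℕ) (u : ℕ → ℝ) {i : ℕ} (h : k < i) : uext k u i = 2 := by
  unfold uext; rw [if_neg (by omega), if_neg (by omega)]

lemma jext_zero (n k : ℕ) (j : ℕ → ℕ) : jext n k j 0 = -(n:ℤ) := by simp [jext]

lemma jext_of (n k : ℕ) (j : ℕ → ℕ) {i : ℕ} (h1 : 1 ≤ i) (h2 : i ≤ k) :
    jext n k j i = (j i : ℤ) := by
  unfold jext; rw [if_neg (by omega), if_pos h2]

lemma jext_top (n k : ℕ) (j : ℕ → ℕ) {i : ℕ} (h : k < i) : jext n k j i = 2 * n := by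
  unfold jext; rw [if_neg (by omega), if_neg (by omega)]

lemma Icc_bounds {n : ℕ} {I : Set (Finset ℕ)} (hI : IsIS n I) {A B : ℕ}
    (hAB : A ≤ B) (hmem : Finset.Icc A B ∈ I) : 1 ≤ A ∧ B ≤ n := by
  obtain ⟨a', b', ha', _, hb', he⟩ := hI.2.2 _ hmem
    (by
      intro h
      have : A ∈ Finset.Icc A B := Finset.mem_Icc.mpr ⟨le_refl A, hAB⟩
      rw [h] at this; simp at this)
  have hA : A ∈ Finset.Icc a' b' := by
    rw [← he]; exact Finset.mem_Icc.mpr ⟨le_refl A, hAB⟩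
  have hB : B ∈ Finset.Icc a' b' := by
    rw [← he]; exact Finset.mem_Icc.mpr ⟨hAB, le_refl B⟩
  simp only [Finset.mem_Icc] at hA hB
  omega

/-- For every `1 ≤ k ≤ n`, every strictly increasing `j ∈ [k:n]` and every
`I ∈ IS(n)` : `φ^n_k(I, j) = φ^∞_k(n⁻¹I, n⁻¹j)` where `n⁻¹j = ((2j₁-1)/(2n),…,(2j_k-1)/(2n))`. -/
theorem stmt3 (n k : ℕ) (hk : 1 ≤ k) (hkn : k ≤ n)
    (I : Set (Finset ℕ)) (hI : IsIS n I)
    (j : ℕ → ℕ) (hjmono : StrictMonoOn j (Set.Icc 1 k))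
    (hjval : ∀ i, 1 ≤ i → i ≤ k → 1 ≤ j i ∧ j i ≤ n) :
    phiFin n k I j = phiInf k (scaleIS n I) (fun i => (2 * (j i : ℝ) - 1) / (2 * n)) := by
  have hn : 0 < n := hk.trans hkn
  have hn' : (0:ℝ) < n := by exact_mod_cast hn
  set u : ℕ → ℝ := fun i => (2 * (j i : ℝ) - 1) / (2 * n) with hu
  ext e
  simp only [phiFin, phiInf, Set.mem_union, Set.mem_setOf_eq]
  constructor
  · rintro (he | ⟨a, b, ha, hab, hbk, he, A, B, hAB, hmem, hx1, hx2, hx3, hx4, hx5⟩)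
    · exact Or.inl (Or.inl he)
    · obtain ⟨hA1, hBn⟩ := Icc_bounds hI hAB hmem
      rcases eq_or_lt_of_le hab with rfl | hab'
      · exact Or.inl (Or.inr ⟨a, ha, hbk, by rw [he, Finset.Icc_self]⟩)
      · have hak : a ≤ k := le_of_lt (lt_of_lt_of_le hab' hbk)
        have hb1 : 1 ≤ b := ha.trans hab
        refine Or.inr ⟨a, b, ha, hab', hbk, he,
          (((A:ℝ) - 1) / n, (B:ℝ) / n), Or.inl ⟨A, B, hA1, hAB, hmem, rfl⟩, ?_, ?_, ?_, ?_⟩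
        · rcases Nat.lt_or_ge 1 a with h1a | h1a
          · rw [jext_of n k j (by omega) (by omega : a - 1 ≤ k)] at hx1
            have : j (a - 1) < A := by exact_mod_cast hx1
            rw [uext_of k u (by omega) (by omega)]
            exact (L2 hn).mpr this
          · have ha1 : a = 1 := le_antisymm h1a ha
            rw [ha1]
            rw [show (1:ℕ) - 1 = 0 from rfl, uext_zero]
            have : (0:ℝ) ≤ ((A:ℝ) - 1) / n := by
              apply div_nonneg _ hn'.le
              have : (1:ℝ) ≤ A := by exact_mod_cast hA1
              linarith
            linarith
        · rw [jext_of n k j ha hak] at hx2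
          have : A ≤ j a := by exact_mod_cast hx2
          rw [uext_of k u ha hak]
          exact (L1 hn).mpr this
        · rw [jext_of n k j hb1 hbk] at hx4
          have : j b ≤ B := by exact_mod_cast hx4
          rw [uext_of k u hb1 hbk]
          exact (L3 hn).mpr this
        · rcases Nat.lt_or_ge b k with hblt | hbge
          · rw [jext_of n k j (by omega) (by omega : b + 1 ≤ k)] at hx5
            have : B < j (b + 1) := by exact_mod_cast hx5
            rw [uext_of k u (by omega) (by omega)]
            exact (L4 hn).mpr this
          · rw [uext_top k u (by omega : k < b + 1)]
            have h1 : (B:ℝ) / n ≤ 1 := by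
              rw [div_le_one hn']
              exact_mod_cast hBn
            linarith
  · rintro ((he | ⟨i, hi1, hik, he⟩) | ⟨a, b, ha, hab, hbk, he, p, hp, hp1, hp2, hp3, hp4⟩)
    · exact Or.inl he
    · obtain ⟨hj1, hjn⟩ := hjval i hi1 hik
      refine Or.inr ⟨i, i, hi1, le_refl i, hik, by rw [he, Finset.Icc_self], j i, j i,
        le_refl _, by rw [Finset.Icc_self]; exact hI.2.1 _ hj1 hjn, ?_, ?_, le_refl _, ?_, ?_⟩
      · rcases Nat.lt_or_ge 1 i with h1i | h1i
        · rw [jext_of n k j (by omega) (by omega : i - 1 ≤ k)]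
          have := hjmono ⟨by omega, by omega⟩ ⟨hi1, hik⟩ (by omega : i - 1 < i)
          exact_mod_cast this
        · have : i = 1 := le_antisymm h1i hi1
          rw [this, show (1:ℕ) - 1 = 0 from rfl, jext_zero]
          omega
      · rw [jext_of n k j hi1 hik]
      · rw [jext_of n k j hi1 hik]
      · rcases Nat.lt_or_ge i k with hilt | hige
        · rw [jext_of n k j (by omega) (by omega : i + 1 ≤ k)]
          have := hjmono ⟨hi1, hik⟩ ⟨by omega, by omega⟩ (by omega : i < i + 1)
          exact_mod_cast this
        · rw [jext_top n k j (by omega : k < i + 1)]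
          omega
    · have hak : a ≤ k := le_of_lt (lt_of_lt_of_le hab hbk)
      have hb1 : 1 ≤ b := ha.trans hab.le
      rcases hp with ⟨A, B, hA1, hAB, hmem, hpe⟩ | ⟨x, hx0, hx1, hpe⟩
      · obtain ⟨_, hBn⟩ := Icc_bounds hI hAB hmem
        subst hpe
        simp only at hp1 hp2 hp3 hp4
        refine Or.inr ⟨a, b, ha, hab.le, hbk, he, A, B, hAB, hmem, ?_, ?_, ?_, ?_, ?_⟩
        · rcases Nat.lt_or_ge 1 a with h1a | h1a
          · rw [uext_of k u (by omega) (by omega : a - 1 ≤ k)] at hp1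
            have := (L2 hn).mp hp1
            rw [jext_of n k j (by omega) (by omega : a - 1 ≤ k)]
            exact_mod_cast this
          · have : a = 1 := le_antisymm h1a ha
            rw [this, show (1:ℕ) - 1 = 0 from rfl, jext_zero]
            omega
        · rw [uext_of k u ha hak] at hp2
          have := (L1 hn).mp hp2
          rw [jext_of n k j ha hak]
          exact_mod_cast this
        · rw [jext_of n k j ha hak, jext_of n k j hb1 hbk]
          have := hjmono ⟨ha, hak⟩ ⟨hb1, hbk⟩ hab
          exact_mod_cast this.le
        · rw [uext_of k u hb1 hbk] at hp3
          have := (L3 hn).mp hp3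
          rw [jext_of n k j hb1 hbk]
          exact_mod_cast this
        · rcases Nat.lt_or_ge b k with hblt | hbge
          · rw [uext_of k u (by omega) (by omega : b + 1 ≤ k)] at hp4
            have := (L4 hn).mp hp4
            rw [jext_of n k j (by omega) (by omega : b + 1 ≤ k)]
            exact_mod_cast this
          · rw [jext_top n k j (by omega : k < b + 1)]
            omega
      · exfalso
        subst hpe
        simp only at hp2 hp3
        rw [uext_of k u ha hak] at hp2
        rw [uext_of k u hb1 hbk] at hp3
        have hjab : j a < j b := hjmono ⟨ha, hak⟩ ⟨hb1, hbk⟩ hab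
        have : u a < u b := by
          rw [hu]
          simp only
          rw [div_lt_div_iff₀ (by positivity) (by positivity)]
          have : (j a : ℝ) < j b := by exact_mod_cast hjab
          nlinarith
        linarith
end
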